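/- Let λ = (λ₁,...,λ_d) ∈ 𝕋^d where 𝕋 = {z ∈ ℂ : |z| = 1}. Define 𝕋_λ = {z ∈ 𝕋^d : z₁^{v₁}···z_d^{v_d} = 1 for all v ∈ ℤ^d with λ₁^{v₁}···λ_d^{v_d} = 1}, and let s : 𝕋_λ → 𝕋_λ be the map (z₁,...,z_d) ↦ (z₁λ₁,...,z_dλ_d). Then for every z ∈ 𝕋_λ, the orbit {sⁿ(z) : n ∈ ℕ} is dense in 𝕋_λ. -/

import Mathlib

open MeasureTheory Set Function

set_option maxHeartbeats 1000000

/-- The set of points of the `d`-torus satisfying all multiplicative relations of `l`. -/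
def Tset (d : ℕ) (l : Fin d → ℂ) : Set (Fin d → ℂ) :=
  {z | (∀ i, ‖z i‖ = 1) ∧
    ∀ v : Fin d → ℤ, (∏ i, l i ^ v i) = 1 → (∏ i, z i ^ v i) = 1}

noncomputable section

namespace OrbitDenseAux

/-- The character `z ↦ ∏ i, z i ^ v i` on the `d`-torus, as a continuous map to `ℂ`. -/
def chara {d : ℕ} (v : Fin d → ℤ) : C(Fin d → Circle, ℂ) :=
  ⟨fun z => ((∏ i, z i ^ v i : Circle) : ℂ),
    (show Continuous (fun u : Circle => (u : ℂ)) from continuous_subtype_val).comp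
      (continuous_finset_prod _ fun i _ =>
      (continuous_apply i).zpow (v i))⟩

variable {d : ℕ}

lemma chara_apply (v : Fin d → ℤ) (z : Fin d → Circle) :
    chara v z = ((∏ i, z i ^ v i : Circle) : ℂ) := rfl

lemma chara_mul_apply (v : Fin d → ℤ) (x y : Fin d → Circle) :
    chara v (x * y) = chara v x * chara v y := by
  simp only [chara_apply, Pi.mul_apply, mul_zpow, Finset.prod_mul_distrib, Circle.coe_mul]

lemma chara_zero : (chara (0 : Fin d → ℤ)) = 1 := by
  ext z
  simp [chara_apply]

lemma chara_mul_chara (v w : Fin d → ℤ) : chara v * chara w = chara (v + w) := by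
  ext z
  simp only [ContinuousMap.mul_apply, chara_apply, Pi.add_apply, zpow_add,
    Finset.prod_mul_distrib, Circle.coe_mul]

lemma star_chara (v : Fin d → ℤ) : star (chara v) = chara (-v) := by
  ext z
  simp only [ContinuousMap.star_apply, chara_apply, Pi.neg_apply, zpow_neg,
    RCLike.star_def]
  rw [← Circle.coe_inv_eq_conj, ← Finset.prod_inv_distrib]

lemma star_mem_span {a : C(Fin d → Circle, ℂ)}
    (ha : a ∈ Submodule.span ℂ (Set.range (chara (d := d)))) :
    star a ∈ Submodule.span ℂ (Set.range (chara (d := d))) := by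
  induction ha using Submodule.span_induction with
  | mem x h =>
    obtain ⟨v, rfl⟩ := h
    rw [star_chara]
    exact Submodule.subset_span ⟨-v, rfl⟩
  | zero => rw [star_zero]; exact Submodule.zero_mem _
  | add x y hx hy hx' hy' => rw [star_add]; exact Submodule.add_mem _ hx' hy'
  | smul c x hx hx' => rw [star_smul]; exact Submodule.smul_mem _ _ hx'

lemma mul_mem_span {a b : C(Fin d → Circle, ℂ)}
    (ha : a ∈ Submodule.span ℂ (Set.range (chara (d := d))))
    (hb : b ∈ Submodule.span ℂ (Set.range (chara (d := d)))) :
    a * b ∈ Submodule.span ℂ (Set.range (chara (d := d))) := by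
  have key : Submodule.span ℂ (Set.range (chara (d := d))) *
      Submodule.span ℂ (Set.range (chara (d := d))) ≤
      Submodule.span ℂ (Set.range (chara (d := d))) := by
    rw [Submodule.span_mul_span]
    refine Submodule.span_le.2 ?_
    rintro x ⟨a, ⟨v, rfl⟩, b, ⟨w, rfl⟩, rfl⟩
    show chara v * chara w ∈ _
    rw [chara_mul_chara]
    exact Submodule.subset_span ⟨v + w, rfl⟩
  exact key (Submodule.mul_mem_mul ha hb)

/-- The star subalgebra of `C(𝕋^d, ℂ)` spanned by the characters. -/
def charAlg (d : ℕ) : StarSubalgebra ℂ C(Fin d → Circle, ℂ) where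
  carrier := (Submodule.span ℂ (Set.range (chara (d := d))) : Submodule ℂ _)
  mul_mem' := fun ha hb => mul_mem_span ha hb
  one_mem' := by
    rw [← chara_zero]; exact Submodule.subset_span ⟨0, rfl⟩
  add_mem' := fun ha hb => Submodule.add_mem _ ha hb
  zero_mem' := Submodule.zero_mem _
  algebraMap_mem' := by
    intro c
    have : (algebraMap ℂ C(Fin d → Circle, ℂ)) c = c • chara 0 := by
      rw [chara_zero]; ext x; simp [Algebra.algebraMap_eq_smul_one]
    rw [this]
    exact Submodule.smul_mem _ _ (Submodule.subset_span ⟨0, rfl⟩)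
  star_mem' := fun ha => star_mem_span ha

lemma charAlg_separates (d : ℕ) : (charAlg d).SeparatesPoints := by
  intro x y hxy
  have : ∃ i, x i ≠ y i := by
    by_contra h
    push_neg at h
    exact hxy (funext h)
  obtain ⟨i, hi⟩ := this
  refine ⟨_, ⟨chara (Pi.single i 1), Submodule.subset_span ⟨_, rfl⟩, rfl⟩, ?_⟩
  simp only [chara_apply]
  have hx : ∀ z : Fin d → Circle, (∏ j, z j ^ (Pi.single i 1 : Fin d → ℤ) j) = z i := by
    intro z
    rw [Finset.prod_eq_single i]
    · simp
    · intro j _ hj; simp [Pi.single_eq_of_ne hj]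
    · simp
  rw [hx, hx]
  exact fun h => hi (Circle.coe_injective h)

lemma dense_charAlg (d : ℕ) (f : C(Fin d → Circle, ℂ)) {ε : ℝ} (hε : 0 < ε) :
    ∃ P ∈ Submodule.span ℂ (Set.range (chara (d := d))), dist f P < ε := by
  have h := ContinuousMap.starSubalgebra_topologicalClosure_eq_top_of_separatesPoints
    (charAlg d) (charAlg_separates d)
  have hf : f ∈ closure ((charAlg d) : Set C(Fin d → Circle, ℂ)) := by
    have : f ∈ (charAlg d).topologicalClosure := h ▸ trivial
    exact this
  obtain ⟨P, hP, hPd⟩ := Metric.mem_closure_iff.1 hf ε hε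
  exact ⟨P, hP, hPd⟩

/-- On a group with a left-invariant probability measure, a multiplicative character
which is somewhere nontrivial has zero integral. -/
lemma integral_char_eq_zero {K : Type*} [Group K] [TopologicalSpace K] [IsTopologicalGroup K]
    [MeasurableSpace K] [BorelSpace K] (ν : Measure K) [ν.IsMulLeftInvariant]
    {χ : K → ℂ} (hmul : ∀ a b, χ (a * b) = χ a * χ b)
    {a : K} (ha : χ a ≠ 1) : ∫ x, χ x ∂ν = 0 := by
  have h1 : ∫ x, χ (a * x) ∂ν = ∫ x, χ x ∂ν := integral_mul_left_eq_self χ a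
  simp_rw [hmul a] at h1
  rw [integral_const_mul] at h1
  have h2 : (χ a - 1) * ∫ x, χ x ∂ν = 0 := by
    rw [sub_mul, one_mul, h1, sub_self]
  rcases mul_eq_zero.1 h2 with h | h
  · exact absurd (sub_eq_zero.1 h) ha
  · exact h

/-- Pontryagin-type duality for closed subgroups of the torus: a point satisfying all
character relations of a closed subgroup `H` of `𝕋^d` belongs to `H`. -/
lemma mem_of_forall_char (d : ℕ) (H : Subgroup (Fin d → Circle))
    (hHc : IsClosed (H : Set (Fin d → Circle))) (w : Fin d → Circle)
    (hw : ∀ v : Fin d → ℤ, (∀ h ∈ H, (∏ i, h i ^ v i) = 1) → (∏ i, w i ^ v i) = 1) :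
    w ∈ H := by
  by_contra hwH
  haveI : CompactSpace H := isCompact_iff_compactSpace.1 hHc.isCompact
  borelize ↥H
  let K₀ : TopologicalSpace.PositiveCompacts H := ⊤
  let ν : Measure H := Measure.haarMeasure K₀
  haveI hprob : IsProbabilityMeasure ν := by
    constructor
    rw [show (univ : Set H) = (K₀ : Set H) from
      (TopologicalSpace.PositiveCompacts.coe_top).symm]
    exact Measure.haarMeasure_self
  -- integrability of continuous functions composed with things
  have hint : ∀ (g : H → ℂ), Continuous g → Integrable g ν := by
    intro g hg
    exact hg.integrable_of_hasCompactSupport (isClosed_tsupport _).isCompact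
  have hcont1 : ∀ P : C(Fin d → Circle, ℂ), Continuous fun h : H => P (h : Fin d → Circle) :=
    fun P => P.continuous.comp continuous_subtype_val
  have hcont2 : ∀ P : C(Fin d → Circle, ℂ),
      Continuous fun h : H => P (w * (h : Fin d → Circle)) :=
    fun P => P.continuous.comp (continuous_const.mul continuous_subtype_val)
  -- the key averaging identity
  have key : ∀ P ∈ Submodule.span ℂ (Set.range (chara (d := d))),
      (∫ h : H, P (w * (h : Fin d → Circle)) ∂ν) = ∫ h : H, P (h : Fin d → Circle) ∂ν := by
    intro P hP
    induction hP using Submodule.span_induction with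
    | mem x h =>
      obtain ⟨v, rfl⟩ := h
      by_cases hv : ∀ h ∈ H, (∏ i, h i ^ v i : Circle) = 1
      · have hwv : chara v w = 1 := by
          rw [chara_apply, hw v hv, Circle.coe_one]
        have hhv : ∀ h : H, chara v (h : Fin d → Circle) = 1 := by
          intro h
          rw [chara_apply, hv h h.2, Circle.coe_one]
        have hwh : ∀ h : H, chara v (w * (h : Fin d → Circle)) = 1 := by
          intro h
          rw [chara_mul_apply, hwv, hhv h, mul_one]
        simp only [hwh, hhv]
      · push_neg at hv
        obtain ⟨h₀, hh₀H, hh₀⟩ := hv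
        have hchi : ∀ a b : H, chara v ((a * b : H) : Fin d → Circle) =
            chara v (a : Fin d → Circle) * chara v (b : Fin d → Circle) := by
          intro a b
          rw [Subgroup.coe_mul, chara_mul_apply]
        have hne : chara v ((⟨h₀, hh₀H⟩ : H) : Fin d → Circle) ≠ 1 := by
          rw [chara_apply]
          intro hcoe
          exact hh₀ (Circle.coe_injective (by rw [hcoe, Circle.coe_one]))
        have hz : ∫ h : H, chara v (h : Fin d → Circle) ∂ν = 0 :=
          integral_char_eq_zero ν hchi hne
        have : ∀ h : H, chara v (w * (h : Fin d → Circle)) =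
            chara v w * chara v (h : Fin d → Circle) := fun h => chara_mul_apply v w h
        simp only [this]
        rw [integral_const_mul, hz, mul_zero]
    | zero => simp
    | add x y hx hy hx' hy' =>
      have := integral_add (hint _ (hcont2 x)) (hint _ (hcont2 y))
      simp only [ContinuousMap.add_apply]
      rw [integral_add (hint _ (hcont2 x)) (hint _ (hcont2 y)),
        integral_add (hint _ (hcont1 x)) (hint _ (hcont1 y)), hx', hy']
    | smul c x hx hx' =>
      simp only [ContinuousMap.smul_apply]
      rw [integral_smul, integral_smul, hx']
  -- Urysohn separation
  have hwHclosed : IsClosed ((fun x => w * x) '' (H : Set (Fin d → Circle))) :=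
    (hHc.isCompact.image (continuous_const.mul continuous_id)).isClosed
  have hdisj : Disjoint (H : Set (Fin d → Circle)) ((fun x => w * x) '' (H : Set (Fin d → Circle))) := by
    rw [Set.disjoint_left]
    rintro x hx ⟨h, hh, rfl⟩
    exact hwH (by simpa using H.mul_mem hx (H.inv_mem hh))
  obtain ⟨f0, hf0H, hf0wH, hf01⟩ :=
    exists_continuous_zero_one_of_isClosed hHc hwHclosed hdisj
  let f : C(Fin d → Circle, ℂ) := ⟨fun x => (f0 x : ℂ),
    Complex.continuous_ofReal.comp f0.continuous⟩
  obtain ⟨P, hP, hPd⟩ := dense_charAlg d f (by norm_num : (0:ℝ) < 1/3)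
  have hPtd : ∀ x, ‖P x - f x‖ ≤ 1/3 := by
    intro x
    calc ‖P x - f x‖ = dist (P x) (f x) := by rw [dist_eq_norm]
    _ ≤ dist P f := ContinuousMap.dist_apply_le_dist x
    _ ≤ 1/3 := by rw [dist_comm]; exact le_of_lt hPd
  -- bound 1 : ‖∫ P(h)‖ ≤ 1/3
  have bound1 : ‖∫ h : H, P (h : Fin d → Circle) ∂ν‖ ≤ 1/3 := by
    have : ∀ᵐ h : H ∂ν, ‖P (h : Fin d → Circle)‖ ≤ 1/3 := by
      filter_upwards with h
      have hf0 : f0 (h : Fin d → Circle) = 0 := hf0H h.2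
      have hfz : f (h : Fin d → Circle) = 0 := by
        simp only [f, ContinuousMap.coe_mk, hf0, Complex.ofReal_zero]
      calc ‖P (h : Fin d → Circle)‖ = ‖P (h : Fin d → Circle) - f (h : Fin d → Circle)‖ := by
            rw [hfz, sub_zero]
      _ ≤ 1/3 := hPtd _
    calc ‖∫ h : H, P (h : Fin d → Circle) ∂ν‖ ≤ 1/3 * (ν univ).toReal :=
          norm_integral_le_of_norm_le_const this
    _ = 1/3 := by simp [hprob.measure_univ]
  -- bound 2 : ‖∫ P(w h) - 1‖ ≤ 1/3
  have hone : (∫ h : H, f (w * (h : Fin d → Circle)) ∂ν) = 1 := by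
    have : ∀ h : H, f (w * (h : Fin d → Circle)) = 1 := by
      intro h
      have : f0 (w * (h : Fin d → Circle)) = 1 := hf0wH ⟨h, h.2, rfl⟩
      simp only [f, ContinuousMap.coe_mk, this, Complex.ofReal_one, Pi.one_apply]
    simp only [this]
    simp
  have bound2 : ‖(∫ h : H, P (w * (h : Fin d → Circle)) ∂ν) - 1‖ ≤ 1/3 := by
    rw [← hone, ← integral_sub (hint _ (hcont2 P)) (hint _ (hcont2 f))]
    have : ∀ᵐ h : H ∂ν, ‖P (w * (h : Fin d → Circle)) - f (w * (h : Fin d → Circle))‖ ≤ 1/3 := by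
      filter_upwards with h
      exact hPtd _
    calc ‖∫ h : H, (P (w * (h : Fin d → Circle)) - f (w * (h : Fin d → Circle))) ∂ν‖
        ≤ 1/3 * (ν univ).toReal := norm_integral_le_of_norm_le_const this
    _ = 1/3 := by simp [hprob.measure_univ]
  have keyP := key P hP
  have : (1 : ℝ) ≤ 2/3 := by
    calc (1:ℝ) = ‖(1 : ℂ)‖ := by simp
    _ ≤ ‖(1 : ℂ) - ∫ h : H, P (w * (h : Fin d → Circle)) ∂ν‖ +
        ‖∫ h : H, P (w * (h : Fin d → Circle)) ∂ν‖ := by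
          simpa using norm_add_le ((1 : ℂ) - ∫ h : H, P (w * (h : Fin d → Circle)) ∂ν)
            (∫ h : H, P (w * (h : Fin d → Circle)) ∂ν)
    _ ≤ 1/3 + 1/3 := by
        refine add_le_add ?_ ?_
        · rw [norm_sub_rev]; exact bound2
        · rw [keyP]; exact bound1
    _ = 2/3 := by norm_num
  linarith

lemma coe_zpow' (a : Circle) (n : ℤ) : ((a ^ n : Circle) : ℂ) = (a : ℂ) ^ n := by
  have h1 : ((a ^ n : Circle) : ℂ) = ((Circle.toUnits (a ^ n) : ℂˣ) : ℂ) := rfl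
  rw [h1, map_zpow Circle.toUnits a n, Units.val_zpow_eq_zpow_val]
  rfl

lemma coe_prod {d : ℕ} (f : Fin d → Circle) :
    ((∏ i, f i : Circle) : ℂ) = ∏ i, (f i : ℂ) :=
  map_prod Circle.coeHom f Finset.univ

/-- The key density statement inside `Circle^d`. -/
lemma mem_closure_orbit (d : ℕ) (L : Fin d → Circle) (W : Fin d → Circle)
    (hW : ∀ v : Fin d → ℤ, (∏ i, L i ^ v i) = 1 → (∏ i, W i ^ v i) = 1) :
    W ∈ closure (Set.range fun n : ℕ => L ^ n) := by
  set H : Subgroup (Fin d → Circle) := (Subgroup.zpowers L).topologicalClosure with hH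
  have hHc : IsClosed (H : Set (Fin d → Circle)) := Subgroup.isClosed_topologicalClosure _
  have hWH : W ∈ H := by
    refine mem_of_forall_char d H hHc W ?_
    intro v hv
    refine hW v (hv L ?_)
    exact Subgroup.le_topologicalClosure _ (Subgroup.mem_zpowers L)
  have hHeq : (H : Set (Fin d → Circle)) = closure (Set.range fun n : ℤ => L ^ n) := by
    rw [hH, Subgroup.topologicalClosure_coe, Subgroup.coe_zpowers]
  have hWH' : W ∈ (H : Set (Fin d → Circle)) := hWH
  rw [hHeq, closure_range_zpow_eq_pow] at hWH'
  exact hWH'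

end OrbitDenseAux

open OrbitDenseAux in
/-- duplicate-of-target statement check below -/
theorem orbit_dense_in_Tset' (d : ℕ) (l : Fin d → ℂ) (hl : ∀ i, ‖l i‖ = 1)
    (z : Fin d → ℂ) (hz : z ∈ {z | (∀ i, ‖z i‖ = 1) ∧
    ∀ v : Fin d → ℤ, (∏ i, l i ^ v i) = 1 → (∏ i, z i ^ v i) = 1}) :
    {z | (∀ i, ‖z i‖ = 1) ∧
    ∀ v : Fin d → ℤ, (∏ i, l i ^ v i) = 1 → (∏ i, z i ^ v i) = 1} ⊆
      closure {x : Fin d → ℂ | ∃ n : ℕ, x = fun i => z i * l i ^ n} := by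
  intro x hx
  -- lift everything to the circle group
  have memC : ∀ {c : ℂ}, ‖c‖ = 1 → c ∈ Submonoid.unitSphere ℂ := by
    intro c hc
    show c ∈ Metric.sphere (0 : ℂ) 1
    rw [mem_sphere_zero_iff_norm, hc]
  let L : Fin d → Circle := fun i => ⟨l i, memC (hl i)⟩
  let Z : Fin d → Circle := fun i => ⟨z i, memC (hz.1 i)⟩
  let X : Fin d → Circle := fun i => ⟨x i, memC (hx.1 i)⟩
  have coeL : ∀ i, (L i : ℂ) = l i := fun _ => rfl
  have coeZ : ∀ i, (Z i : ℂ) = z i := fun _ => rfl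
  have coeX : ∀ i, (X i : ℂ) = x i := fun _ => rfl
  -- transfer relations
  have prodC : ∀ (u : Fin d → Circle) (v : Fin d → ℤ),
      ((∏ i, u i ^ v i : Circle) : ℂ) = ∏ i, (u i : ℂ) ^ v i := by
    intro u v
    rw [coe_prod]
    exact Finset.prod_congr rfl fun i _ => coe_zpow' (u i) (v i)
  set W : Fin d → Circle := Z⁻¹ * X with hWdef
  have hW : ∀ v : Fin d → ℤ, (∏ i, L i ^ v i) = 1 → (∏ i, W i ^ v i) = 1 := by
    intro v hv
    have hlv : (∏ i, l i ^ v i) = 1 := by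
      rw [← prodC L v, hv, Circle.coe_one]
    have hzv := hz.2 v hlv
    have hxv := hx.2 v hlv
    apply Circle.coe_injective
    rw [prodC W v, Circle.coe_one]
    have : ∀ i, ((W i : ℂ)) = (z i)⁻¹ * x i := by
      intro i
      simp only [hWdef, Pi.mul_apply, Pi.inv_apply, Circle.coe_mul, Circle.coe_inv, coeZ, coeX]
    simp only [this]
    calc (∏ i, ((z i)⁻¹ * x i) ^ v i) = (∏ i, (z i)⁻¹ ^ v i) * ∏ i, x i ^ v i := by
          rw [← Finset.prod_mul_distrib]
          exact Finset.prod_congr rfl fun i _ => mul_zpow _ _ _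
    _ = (∏ i, z i ^ v i)⁻¹ * ∏ i, x i ^ v i := by
          rw [← Finset.prod_inv_distrib]
          exact congrArg (· * _) (Finset.prod_congr rfl fun i _ => (inv_zpow _ _))
    _ = 1 := by rw [hzv, hxv]; simp
  have hWc : W ∈ closure (Set.range fun n : ℕ => L ^ n) := mem_closure_orbit d L W hW
  -- translate by Z
  have hXc : X ∈ closure (Set.range fun n : ℕ => Z * L ^ n) := by
    have hcont : Continuous fun u : Fin d → Circle => Z * u := continuous_const.mul continuous_id
    have h1 : X = Z * W := by
      rw [hWdef]
      rw [mul_inv_cancel_left]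
    have h2 := image_closure_subset_closure_image (f := fun u : Fin d → Circle => Z * u) hcont
      (s := Set.range fun n : ℕ => L ^ n)
    have h3 : Z * W ∈ (fun u : Fin d → Circle => Z * u) '' closure (Set.range fun n : ℕ => L ^ n) :=
      Set.mem_image_of_mem _ hWc
    have h4 := h2 h3
    rw [h1]
    refine closure_mono ?_ h4
    rintro y ⟨u, ⟨n, rfl⟩, rfl⟩
    exact ⟨n, rfl⟩
  -- push down to ℂ
  let ι : (Fin d → Circle) → (Fin d → ℂ) := fun u i => (u i : ℂ)
  have hι : Continuous ι :=
    continuous_pi fun i => continuous_subtype_val.comp (continuous_apply i)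
  have h5 := image_closure_subset_closure_image (f := ι) hι
    (s := Set.range fun n : ℕ => Z * L ^ n)
  have h6 : x ∈ closure (ι '' Set.range fun n : ℕ => Z * L ^ n) := by
    have : x = ι X := rfl
    rw [this]
    exact h5 (Set.mem_image_of_mem _ hXc)
  refine closure_mono ?_ h6
  rintro y ⟨u, ⟨n, rfl⟩, rfl⟩
  refine ⟨n, ?_⟩
  ext i
  simp only [ι, Pi.mul_apply, Pi.pow_apply, Circle.coe_mul]
  have h8 := coe_zpow' (L i) (n : ℤ)
  rw [zpow_natCast, zpow_natCast] at h8
  rw [h8, coeL]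


/-- The orbit of any point of `𝕋_λ` under coordinatewise multiplication by `λ`
is dense in `𝕋_λ`. -/
theorem orbit_dense_in_Tset (d : ℕ) (l : Fin d → ℂ) (hl : ∀ i, ‖l i‖ = 1)
    (z : Fin d → ℂ) (hz : z ∈ Tset d l) :
    Tset d l ⊆ closure {x : Fin d → ℂ | ∃ n : ℕ, x = fun i => z i * l i ^ n} := by
  intro x hx
  exact orbit_dense_in_Tset' d l hl z hz hx
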